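/- With the sub-Markov semigroup setup below, define σ_T²(φ) := p_T²·Var_{η_T}(φ) − p_T²·(log p_T)·(η_T(φ))² + 2∫_{(0,T]} Var_{η_t}(Q^{T−t}φ)·p_t dμ(t) for each bounded measurable φ for which t ↦ γ_t((Q^{T−t}φ)²) is Borel measurable. If (φ_n) is a sequence of such functions and φ is such a function with ‖φ_n − φ‖_∞ → 0, then σ_T²(φ_n) → σ_T²(φ). -/

import Mathlib

open MeasureTheory ProbabilityTheory Set Filter
open scoped ENNReal Topology

/-- Action of a kernel on a real test function: `κf(x) = ∫ f(y) κ(x,dy)`. -/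
noncomputable def kapply {E : Type*} [MeasurableSpace E]
    (κ : ProbabilityTheory.Kernel E E) (f : E → ℝ) (x : E) : ℝ :=
  ∫ y, f y ∂(κ x)

/-- The unnormalized measure `γ_t(ψ) = ∫ Q^t ψ dη₀`. -/
noncomputable def gammaMeas {E : Type*} [MeasurableSpace E]
    (Q : ℝ → ProbabilityTheory.Kernel E E) (η₀ : Measure E) (t : ℝ) (ψ : E → ℝ) : ℝ :=
  ∫ x, kapply (Q t) ψ x ∂η₀

/-- The survival probability `p_t = γ_t(1)`. -/
noncomputable def pFun {E : Type*} [MeasurableSpace E]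
    (Q : ℝ → ProbabilityTheory.Kernel E E) (η₀ : Measure E) (t : ℝ) : ℝ :=
  gammaMeas Q η₀ t fun _ => 1

/-- The normalized measure `η_t(ψ) = γ_t(ψ) / p_t`. -/
noncomputable def etaMeas {E : Type*} [MeasurableSpace E]
    (Q : ℝ → ProbabilityTheory.Kernel E E) (η₀ : Measure E) (t : ℝ) (ψ : E → ℝ) : ℝ :=
  gammaMeas Q η₀ t ψ / pFun Q η₀ t

/-- The variance `Var_{η_t}(ψ) = η_t(ψ²) − (η_t ψ)²`. -/
noncomputable def etaVar {E : Type*} [MeasurableSpace E]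
    (Q : ℝ → ProbabilityTheory.Kernel E E) (η₀ : Measure E) (t : ℝ) (ψ : E → ℝ) : ℝ :=
  etaMeas Q η₀ t (fun x => (ψ x) ^ 2) - (etaMeas Q η₀ t ψ) ^ 2

/-- The asymptotic variance
`σ_T²(φ) = p_T² Var_{η_T}(φ) − p_T² log p_T (η_T φ)² + 2 ∫_{(0,T]} Var_{η_t}(Q^{T−t}φ) p_t dμ`. -/
noncomputable def sigmaSqT {E : Type*} [MeasurableSpace E]
    (Q : ℝ → ProbabilityTheory.Kernel E E) (η₀ : Measure E) (T : ℝ) (μ : Measure ℝ)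
    (φ : E → ℝ) : ℝ :=
  (pFun Q η₀ T) ^ 2 * etaVar Q η₀ T φ
    - (pFun Q η₀ T) ^ 2 * Real.log (pFun Q η₀ T) * (etaMeas Q η₀ T φ) ^ 2
    + 2 * ∫ t in Set.Ioc 0 T, etaVar Q η₀ t (kapply (Q (T - t)) φ) * pFun Q η₀ t ∂μ

section stmt8_aux
variable {E : Type*} [MeasurableSpace E]

lemma stmt8_finKer (κ : Kernel E E) (h : ∀ x, κ x Set.univ ≤ 1) : IsFiniteKernel κ :=
  ⟨⟨1, ENNReal.one_lt_top, h⟩⟩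

lemma stmt8_integrable (κ : Kernel E E) [IsFiniteKernel κ] {f : E → ℝ} (hf : Measurable f)
    {C : ℝ} (hC : ∀ x, |f x| ≤ C) (x : E) : Integrable f (κ x) := by
  refine Integrable.mono' (integrable_const C) hf.aestronglyMeasurable ?_
  exact Eventually.of_forall fun y => by simpa using hC y

lemma stmt8_measKapply (κ : Kernel E E) [IsFiniteKernel κ] {f : E → ℝ} (hf : Measurable f) :
    Measurable (kapply κ f) := by
  have : StronglyMeasurable (Function.uncurry fun (_ : E) (y : E) => f y) :=
    (hf.stronglyMeasurable.comp_measurable measurable_snd)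
  exact this.integral_kernel_prod_right.measurable

lemma stmt8_kapply_bound (κ : Kernel E E) (hκ : ∀ x, κ x Set.univ ≤ 1)
    {f : E → ℝ} {C : ℝ} (hC0 : 0 ≤ C) (hC : ∀ x, |f x| ≤ C) (x : E) :
    |kapply κ f x| ≤ C := by
  haveI : IsFiniteMeasure (κ x) := ⟨lt_of_le_of_lt (hκ x) ENNReal.one_lt_top⟩
  have h1 : ‖∫ y, f y ∂(κ x)‖ ≤ C * ((κ x) Set.univ).toReal :=
    norm_integral_le_of_norm_le_const (Eventually.of_forall fun y => by simpa using hC y)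
  have h2 : ((κ x) Set.univ).toReal ≤ 1 := by
    simpa using ENNReal.toReal_mono (by simp) (hκ x)
  calc |kapply κ f x| ≤ C * ((κ x) Set.univ).toReal := h1
    _ ≤ C * 1 := by gcongr
    _ = C := mul_one C

lemma stmt8_kapply_mono (κ : Kernel E E) [IsFiniteKernel κ] {f g : E → ℝ}
    (hf : Measurable f) (hg : Measurable g) {Cf Cg : ℝ} (hCf : ∀ x, |f x| ≤ Cf)
    (hCg : ∀ x, |g x| ≤ Cg) (h : ∀ x, f x ≤ g x) (x : E) :
    kapply κ f x ≤ kapply κ g x :=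
  integral_mono (stmt8_integrable κ hf hCf x) (stmt8_integrable κ hg hCg x) h

lemma stmt8_kapply_sub (κ : Kernel E E) [IsFiniteKernel κ] {f g : E → ℝ}
    (hf : Measurable f) (hg : Measurable g) {Cf Cg : ℝ} (hCf : ∀ x, |f x| ≤ Cf)
    (hCg : ∀ x, |g x| ≤ Cg) (x : E) :
    kapply κ (fun y => f y - g y) x = kapply κ f x - kapply κ g x :=
  integral_sub (stmt8_integrable κ hf hCf x) (stmt8_integrable κ hg hCg x)

variable (Q : ℝ → Kernel E E) (η₀ : Measure E) [IsProbabilityMeasure η₀]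

lemma stmt8_gamma_bound {t : ℝ} (hκ : ∀ x, Q t x Set.univ ≤ 1)
    {f : E → ℝ} {C : ℝ} (hC0 : 0 ≤ C) (hC : ∀ x, |f x| ≤ C) :
    |gammaMeas Q η₀ t f| ≤ C := by
  have h1 : ‖∫ x, kapply (Q t) f x ∂η₀‖ ≤ C * (η₀ Set.univ).toReal :=
    norm_integral_le_of_norm_le_const
      (Eventually.of_forall fun x => by simpa using stmt8_kapply_bound (Q t) hκ hC0 hC x)
  simpa [gammaMeas] using h1

lemma stmt8_gamma_sub {t : ℝ} (hκ : ∀ x, Q t x Set.univ ≤ 1)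
    {f g : E → ℝ} (hf : Measurable f) (hg : Measurable g)
    {Cf Cg : ℝ} (hCf0 : 0 ≤ Cf) (hCg0 : 0 ≤ Cg)
    (hCf : ∀ x, |f x| ≤ Cf) (hCg : ∀ x, |g x| ≤ Cg) :
    gammaMeas Q η₀ t (fun y => f y - g y) = gammaMeas Q η₀ t f - gammaMeas Q η₀ t g := by
  haveI : IsFiniteKernel (Q t) := stmt8_finKer _ hκ
  have hint : ∀ (h : E → ℝ), Measurable h → ∀ {C : ℝ}, 0 ≤ C → (∀ x, |h x| ≤ C) →
      Integrable (kapply (Q t) h) η₀ := fun h hh C hC0 hC =>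
    Integrable.mono' (integrable_const C) (stmt8_measKapply (Q t) hh).aestronglyMeasurable
      (Eventually.of_forall fun x => by simpa using stmt8_kapply_bound (Q t) hκ hC0 hC x)
  have heq : ∀ x, kapply (Q t) (fun y => f y - g y) x = kapply (Q t) f x - kapply (Q t) g x :=
    stmt8_kapply_sub (Q t) hf hg hCf hCg
  calc gammaMeas Q η₀ t (fun y => f y - g y)
      = ∫ x, (kapply (Q t) f x - kapply (Q t) g x) ∂η₀ := by
        simp only [gammaMeas]; exact integral_congr_ae (Eventually.of_forall heq)
    _ = _ := integral_sub (hint f hf hCf0 hCf) (hint g hg hCg0 hCg)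

lemma stmt8_gamma_diff {t : ℝ} (hκ : ∀ x, Q t x Set.univ ≤ 1)
    {f g : E → ℝ} (hf : Measurable f) (hg : Measurable g)
    {Cf Cg : ℝ} (hCf0 : 0 ≤ Cf) (hCg0 : 0 ≤ Cg)
    (hCf : ∀ x, |f x| ≤ Cf) (hCg : ∀ x, |g x| ≤ Cg)
    {δ : ℝ} (hδ0 : 0 ≤ δ) (hδ : ∀ x, |f x - g x| ≤ δ) :
    |gammaMeas Q η₀ t f - gammaMeas Q η₀ t g| ≤ δ := by
  rw [← stmt8_gamma_sub Q η₀ hκ hf hg hCf0 hCg0 hCf hCg]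
  exact stmt8_gamma_bound Q η₀ hκ hδ0 hδ

lemma stmt8_p_le_one {t : ℝ} (hκ : ∀ x, Q t x Set.univ ≤ 1) : pFun Q η₀ t ≤ 1 := by
  have := stmt8_gamma_bound Q η₀ hκ (f := fun _ => (1:ℝ)) (C := 1) zero_le_one (fun x => by simp)
  calc pFun Q η₀ t ≤ |pFun Q η₀ t| := le_abs_self _
    _ ≤ 1 := this

/-- semigroup property at the level of `gammaMeas`. -/
lemma stmt8_gamma_semigroup
    (hsemi : ∀ s t : ℝ, 0 ≤ s → 0 ≤ t → ∀ f : E → ℝ, Measurable f →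
        (∃ C, ∀ x, |f x| ≤ C) → kapply (Q (s + t)) f = kapply (Q s) (kapply (Q t) f))
    {T t : ℝ} (ht : 0 ≤ t) (htT : t ≤ T)
    {f : E → ℝ} (hf : Measurable f) (hfb : ∃ C, ∀ x, |f x| ≤ C) :
    gammaMeas Q η₀ T f = gammaMeas Q η₀ t (kapply (Q (T - t)) f) := by
  have h := hsemi t (T - t) ht (by linarith) f hf hfb
  rw [add_sub_cancel] at h
  simp only [gammaMeas, h]

/-- `p` is bounded below by `p_T` on `[0, T]`. -/
lemma stmt8_p_lower
    (hsub : ∀ t : ℝ, 0 ≤ t → ∀ x, Q t x Set.univ ≤ 1)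
    (hsemi : ∀ s t : ℝ, 0 ≤ s → 0 ≤ t → ∀ f : E → ℝ, Measurable f →
        (∃ C, ∀ x, |f x| ≤ C) → kapply (Q (s + t)) f = kapply (Q s) (kapply (Q t) f))
    {T t : ℝ} (ht : 0 ≤ t) (htT : t ≤ T) :
    pFun Q η₀ T ≤ pFun Q η₀ t := by
  haveI : IsFiniteKernel (Q t) := stmt8_finKer _ (hsub t ht)
  have hTt : (0:ℝ) ≤ T - t := by linarith
  have hone : ∀ x : E, |(1:ℝ)| ≤ (1:ℝ) := fun x => by simp
  have h1 : pFun Q η₀ T = gammaMeas Q η₀ t (kapply (Q (T - t)) fun _ => (1:ℝ)) :=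
    stmt8_gamma_semigroup Q η₀ hsemi ht htT measurable_const ⟨1, hone⟩
  rw [h1]
  have hmeas1 : Measurable (kapply (Q (T - t)) fun _ => (1:ℝ)) := by
    haveI : IsFiniteKernel (Q (T - t)) := stmt8_finKer _ (hsub _ hTt)
    exact stmt8_measKapply _ measurable_const
  have hb1 : ∀ x, |kapply (Q (T - t)) (fun _ => (1:ℝ)) x| ≤ 1 :=
    stmt8_kapply_bound _ (hsub _ hTt) zero_le_one hone
  have hle : ∀ x, kapply (Q (T - t)) (fun _ => (1:ℝ)) x ≤ (fun _ => (1:ℝ)) x :=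
    fun x => le_trans (le_abs_self _) (hb1 x)
  have hmono : ∀ x, kapply (Q t) (kapply (Q (T - t)) fun _ => (1:ℝ)) x
      ≤ kapply (Q t) (fun _ => (1:ℝ)) x :=
    stmt8_kapply_mono (Q t) hmeas1 measurable_const hb1 hone hle
  have hint : ∀ (h : E → ℝ), Measurable h → (∀ x, |h x| ≤ (1:ℝ)) → Integrable (kapply (Q t) h) η₀ :=
    fun h hh hC => Integrable.mono' (integrable_const 1)
      (stmt8_measKapply (Q t) hh).aestronglyMeasurable
      (Eventually.of_forall fun x => by simpa using stmt8_kapply_bound (Q t) (hsub t ht) zero_le_one hC x)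
  exact integral_mono (hint _ hmeas1 hb1) (hint _ measurable_const hone) hmono

end stmt8_aux

section stmt8_aux2
variable {E : Type*} [MeasurableSpace E]
  (Q : ℝ → Kernel E E) (η₀ : Measure E) [IsProbabilityMeasure η₀]

lemma stmt8_sq_diff {a b C D : ℝ} (hab : |a - b| ≤ D) (ha : |a| ≤ C + D) (hb : |b| ≤ C)
    (hD : 0 ≤ D) : |a ^ 2 - b ^ 2| ≤ D * (2 * C + D) := by
  have h : a ^ 2 - b ^ 2 = (a - b) * (a + b) := by ring
  rw [h, abs_mul]
  have h2 : |a + b| ≤ 2 * C + D := (abs_add_le _ _).trans (by linarith)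
  exact mul_le_mul hab h2 (abs_nonneg _) hD

lemma stmt8_F_integrable
    (hsub : ∀ t : ℝ, 0 ≤ t → ∀ x, Q t x Set.univ ≤ 1)
    {T : ℝ} (μ : Measure ℝ) [IsFiniteMeasure (μ.restrict (Set.Ioc 0 T))]
    {g : E → ℝ} (hg : Measurable g) {Cg : ℝ} (hCg0 : 0 ≤ Cg) (hCg : ∀ x, |g x| ≤ Cg)
    (hmeasg : Measurable ((Set.Icc (0 : ℝ) T).restrict
        fun t => gammaMeas Q η₀ t fun x => (kapply (Q (T - t)) g x) ^ 2)) :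
    Integrable (fun t => gammaMeas Q η₀ t fun x => (kapply (Q (T - t)) g x) ^ 2)
      (μ.restrict (Set.Ioc 0 T)) := by
  have hmeas' : AEMeasurable (fun t => gammaMeas Q η₀ t fun x => (kapply (Q (T - t)) g x) ^ 2)
      (μ.restrict (Set.Icc 0 T)) :=
    aemeasurable_restrict_of_measurable_subtype measurableSet_Icc hmeasg
  have hmeas : AEMeasurable (fun t => gammaMeas Q η₀ t fun x => (kapply (Q (T - t)) g x) ^ 2)
      (μ.restrict (Set.Ioc 0 T)) :=
    hmeas'.mono_measure (Measure.restrict_mono Set.Ioc_subset_Icc_self le_rfl)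
  refine Integrable.mono' (integrable_const (Cg ^ 2)) hmeas.aestronglyMeasurable ?_
  filter_upwards [ae_restrict_mem measurableSet_Ioc] with t ht
  have hTt : (0:ℝ) ≤ T - t := by linarith [ht.2]
  have hb : ∀ x, |kapply (Q (T - t)) g x| ≤ Cg := stmt8_kapply_bound _ (hsub _ hTt) hCg0 hCg
  have hb2 : ∀ x, |(kapply (Q (T - t)) g x) ^ 2| ≤ Cg ^ 2 := fun x => by
    rw [abs_pow]; exact pow_le_pow_left₀ (abs_nonneg _) (hb x) 2
  simpa using stmt8_gamma_bound Q η₀ (hsub t ht.1.le) (by positivity) hb2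

lemma stmt8_pinv_integrable
    (hsub : ∀ t : ℝ, 0 ≤ t → ∀ x, Q t x Set.univ ≤ 1)
    (hsemi : ∀ s t : ℝ, 0 ≤ s → 0 ≤ t → ∀ f : E → ℝ, Measurable f →
        (∃ C, ∀ x, |f x| ≤ C) → kapply (Q (s + t)) f = kapply (Q s) (kapply (Q t) f))
    {T : ℝ} (hpcont : ContinuousOn (pFun Q η₀) (Set.Icc 0 T))
    (hpT : 0 < pFun Q η₀ T)
    (μ : Measure ℝ) [IsFiniteMeasure (μ.restrict (Set.Ioc 0 T))] :
    Integrable (fun t => (pFun Q η₀ t)⁻¹) (μ.restrict (Set.Ioc 0 T)) := by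
  have hmeas' : AEMeasurable (pFun Q η₀) (μ.restrict (Set.Icc 0 T)) :=
    hpcont.aemeasurable measurableSet_Icc
  have hmeas : AEMeasurable (fun t => (pFun Q η₀ t)⁻¹) (μ.restrict (Set.Ioc 0 T)) :=
    (hmeas'.mono_measure (Measure.restrict_mono Set.Ioc_subset_Icc_self le_rfl)).inv
  refine Integrable.mono' (integrable_const ((pFun Q η₀ T)⁻¹)) hmeas.aestronglyMeasurable ?_
  filter_upwards [ae_restrict_mem measurableSet_Ioc] with t ht
  have hle : pFun Q η₀ T ≤ pFun Q η₀ t := stmt8_p_lower Q η₀ hsub hsemi ht.1.le ht.2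
  have hpt : 0 < pFun Q η₀ t := lt_of_lt_of_le hpT hle
  rw [Real.norm_eq_abs, abs_of_pos (inv_pos.2 hpt)]
  exact inv_anti₀ hpT hle

lemma stmt8_formula
    (hsub : ∀ t : ℝ, 0 ≤ t → ∀ x, Q t x Set.univ ≤ 1)
    (hsemi : ∀ s t : ℝ, 0 ≤ s → 0 ≤ t → ∀ f : E → ℝ, Measurable f →
        (∃ C, ∀ x, |f x| ≤ C) → kapply (Q (s + t)) f = kapply (Q s) (kapply (Q t) f))
    {T : ℝ} (hpT : 0 < pFun Q η₀ T) (μ : Measure ℝ)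
    {g : E → ℝ} (hg : Measurable g) {Cg : ℝ} (hCg : ∀ x, |g x| ≤ Cg)
    (hFint : Integrable (fun t => gammaMeas Q η₀ t fun x => (kapply (Q (T - t)) g x) ^ 2)
      (μ.restrict (Set.Ioc 0 T)))
    (hpint : Integrable (fun t => (pFun Q η₀ t)⁻¹) (μ.restrict (Set.Ioc 0 T))) :
    sigmaSqT Q η₀ T μ g =
      pFun Q η₀ T * gammaMeas Q η₀ T (fun x => g x ^ 2) - (gammaMeas Q η₀ T g) ^ 2
      - Real.log (pFun Q η₀ T) * (gammaMeas Q η₀ T g) ^ 2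
      + 2 * ((∫ t in Set.Ioc 0 T, gammaMeas Q η₀ t (fun x => (kapply (Q (T - t)) g x) ^ 2) ∂μ)
          - (gammaMeas Q η₀ T g) ^ 2 * ∫ t in Set.Ioc 0 T, (pFun Q η₀ t)⁻¹ ∂μ) := by
  have hpT' : pFun Q η₀ T ≠ 0 := ne_of_gt hpT
  have hintEq : (∫ t in Set.Ioc 0 T, etaVar Q η₀ t (kapply (Q (T - t)) g) * pFun Q η₀ t ∂μ)
      = (∫ t in Set.Ioc 0 T, gammaMeas Q η₀ t (fun x => (kapply (Q (T - t)) g x) ^ 2) ∂μ)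
        - (gammaMeas Q η₀ T g) ^ 2 * ∫ t in Set.Ioc 0 T, (pFun Q η₀ t)⁻¹ ∂μ := by
    rw [setIntegral_congr_fun measurableSet_Ioc
      (g := fun t => gammaMeas Q η₀ t (fun x => (kapply (Q (T - t)) g x) ^ 2)
        - (gammaMeas Q η₀ T g) ^ 2 * (pFun Q η₀ t)⁻¹) ?_]
    · rw [integral_sub hFint (hpint.const_mul _), integral_const_mul]
    · intro t ht
      have hle : pFun Q η₀ T ≤ pFun Q η₀ t := stmt8_p_lower Q η₀ hsub hsemi ht.1.le ht.2
      have hpt : pFun Q η₀ t ≠ 0 := ne_of_gt (lt_of_lt_of_le hpT hle)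
      have hG : gammaMeas Q η₀ t (kapply (Q (T - t)) g) = gammaMeas Q η₀ T g :=
        (stmt8_gamma_semigroup Q η₀ hsemi ht.1.le ht.2 hg ⟨Cg, hCg⟩).symm
      simp only [etaVar, etaMeas, hG]
      field_simp
  rw [sigmaSqT, hintEq, etaVar, etaMeas, etaMeas]
  field_simp

end stmt8_aux2

/-- The asymptotic variance `σ_T²` is continuous with respect to uniform
convergence of the bounded measurable test functions. -/
theorem stmt_8 {E : Type*} [MeasurableSpace E]
    (Q : ℝ → ProbabilityTheory.Kernel E E)
    (hsub : ∀ t : ℝ, 0 ≤ t → ∀ x, Q t x Set.univ ≤ 1)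
    (hid : ∀ f : E → ℝ, Measurable f → (∃ C, ∀ x, |f x| ≤ C) → kapply (Q 0) f = f)
    (hsemi : ∀ s t : ℝ, 0 ≤ s → 0 ≤ t → ∀ f : E → ℝ, Measurable f →
        (∃ C, ∀ x, |f x| ≤ C) → kapply (Q (s + t)) f = kapply (Q s) (kapply (Q t) f))
    (η₀ : Measure E) [IsProbabilityMeasure η₀]
    (T : ℝ) (hT : 0 < T)
    (hpcont : ContinuousOn (pFun Q η₀) (Set.Icc 0 T))
    (hpT : 0 < pFun Q η₀ T)
    (μ : Measure ℝ) (hsupp : μ (Set.Ioc 0 T)ᶜ = 0)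
    (hμ : ∀ s t : ℝ, 0 ≤ s → s ≤ t → t ≤ T →
        μ (Set.Ioc s t) = ENNReal.ofReal (pFun Q η₀ s - pFun Q η₀ t))
    (φ : E → ℝ) (hφ : Measurable φ) (hφb : ∃ C, ∀ x, |φ x| ≤ C)
    (hmeasφ : Measurable ((Set.Icc (0 : ℝ) T).restrict
        fun t => gammaMeas Q η₀ t fun x => (kapply (Q (T - t)) φ x) ^ 2))
    (φn : ℕ → E → ℝ) (hφn : ∀ n, Measurable (φn n)) (hφnb : ∀ n, ∃ C, ∀ x, |φn n x| ≤ C)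
    (hmeasφn : ∀ n, Measurable ((Set.Icc (0 : ℝ) T).restrict
        fun t => gammaMeas Q η₀ t fun x => (kapply (Q (T - t)) (φn n) x) ^ 2))
    (hunif : TendstoUniformly φn φ atTop) :
    Tendsto (fun n => sigmaSqT Q η₀ T μ (φn n)) atTop (𝓝 (sigmaSqT Q η₀ T μ φ)) := by
  classical
  -- a nonnegative uniform bound for φ
  obtain ⟨C₀, hC₀⟩ := hφb
  set C : ℝ := max C₀ 0 with hCdef
  have hC0 : 0 ≤ C := le_max_right _ _
  have hC : ∀ x, |φ x| ≤ C := fun x => (hC₀ x).trans (le_max_left _ _)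
  -- the uniform distance between φn n and φ
  set D : ℕ → ℝ := fun n => ⨆ x, |φn n x - φ x| with hDdef
  have hbdd : ∀ n, BddAbove (Set.range fun x => |φn n x - φ x|) := by
    intro n; obtain ⟨Cn, hCn⟩ := hφnb n
    refine ⟨Cn + C, ?_⟩
    rintro y ⟨x, rfl⟩
    exact (abs_sub _ _).trans (add_le_add (hCn x) (hC x))
  have hDle : ∀ n x, |φn n x - φ x| ≤ D n := fun n x => le_ciSup (hbdd n) x
  have hD0 : ∀ n, 0 ≤ D n := fun n => Real.iSup_nonneg fun x => abs_nonneg _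
  have hDto : Tendsto D atTop (𝓝 0) := by
    rw [Metric.tendsto_atTop]
    intro ε hε
    have h2 := Metric.tendstoUniformly_iff.1 hunif (ε / 2) (by linarith)
    rw [eventually_atTop] at h2
    obtain ⟨N, hN⟩ := h2
    refine ⟨N, fun n hn => ?_⟩
    rw [Real.dist_eq, sub_zero, abs_of_nonneg (hD0 n)]
    have hDn : D n ≤ ε / 2 := by
      refine Real.iSup_le (fun x => ?_) (by linarith)
      have := hN n hn x
      rw [Real.dist_eq] at this
      calc |φn n x - φ x| = |φ x - φn n x| := abs_sub_comm _ _
        _ ≤ ε / 2 := this.le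
    linarith
  have hCn : ∀ n x, |φn n x| ≤ C + D n := fun n x =>
    calc |φn n x| = |(φn n x - φ x) + φ x| := by ring_nf
      _ ≤ |φn n x - φ x| + |φ x| := abs_add_le _ _
      _ ≤ D n + C := add_le_add (hDle n x) (hC x)
      _ = C + D n := by ring
  set δ : ℕ → ℝ := fun n => D n * (2 * C + D n) with hδdef
  have hδ0 : ∀ n, 0 ≤ δ n := fun n => mul_nonneg (hD0 n) (by linarith [hD0 n, hC0])
  have hδto : Tendsto δ atTop (𝓝 0) := by
    have h := hDto.mul ((tendsto_const_nhds (x := 2 * C) (f := atTop)).add hDto)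
    simpa using h
  -- finiteness of μ restricted to (0, T]
  haveI hfin : IsFiniteMeasure (μ.restrict (Set.Ioc 0 T)) := by
    refine ⟨?_⟩
    rw [Measure.restrict_apply_univ, hμ 0 T le_rfl hT.le le_rfl]
    exact ENNReal.ofReal_lt_top
  set M : ℝ := ((μ.restrict (Set.Ioc 0 T)) Set.univ).toReal with hMdef
  -- notation
  set G : (E → ℝ) → ℝ := fun g => gammaMeas Q η₀ T g with hGdef
  set F : (E → ℝ) → ℝ → ℝ :=
    fun g t => gammaMeas Q η₀ t fun x => (kapply (Q (T - t)) g x) ^ 2 with hFdef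
  -- integrability facts
  have hFintφ : Integrable (F φ) (μ.restrict (Set.Ioc 0 T)) :=
    stmt8_F_integrable Q η₀ hsub μ hφ hC0 hC hmeasφ
  have hFintn : ∀ n, Integrable (F (φn n)) (μ.restrict (Set.Ioc 0 T)) := fun n =>
    stmt8_F_integrable Q η₀ hsub μ (hφn n) (by linarith [hD0 n]) (hCn n) (hmeasφn n)
  have hpint : Integrable (fun t => (pFun Q η₀ t)⁻¹) (μ.restrict (Set.Ioc 0 T)) :=
    stmt8_pinv_integrable Q η₀ hsub hsemi hpcont hpT μ
  -- convergence of the first moments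
  have ha : Tendsto (fun n => G (φn n)) atTop (𝓝 (G φ)) := by
    rw [← tendsto_sub_nhds_zero_iff]
    refine squeeze_zero_norm (fun n => ?_) hDto
    exact stmt8_gamma_diff Q η₀ (hsub T hT.le) (hφn n) hφ (by linarith [hD0 n]) hC0
      (hCn n) hC (hD0 n) (hDle n)
  -- convergence of the second moments at time T
  have hb : Tendsto (fun n => gammaMeas Q η₀ T (fun x => φn n x ^ 2)) atTop
      (𝓝 (gammaMeas Q η₀ T (fun x => φ x ^ 2))) := by
    rw [← tendsto_sub_nhds_zero_iff]
    refine squeeze_zero_norm (fun n => ?_) hδto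
    refine stmt8_gamma_diff Q η₀ (hsub T hT.le) ((hφn n).pow measurable_const)
      (hφ.pow measurable_const) (Cf := (C + D n) ^ 2) (Cg := C ^ 2) (by positivity) (by positivity) (fun x => ?_) (fun x => ?_)
      (hδ0 n) (fun x => ?_)
    · rw [abs_pow]; exact pow_le_pow_left₀ (abs_nonneg _) (hCn n x) 2
    · rw [abs_pow]; exact pow_le_pow_left₀ (abs_nonneg _) (hC x) 2
    · exact stmt8_sq_diff (hDle n x) (hCn n x) (hC x) (hD0 n)
  -- convergence of the time integrals
  have hz : Tendsto (fun n => ∫ t in Set.Ioc 0 T, F (φn n) t ∂μ) atTop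
      (𝓝 (∫ t in Set.Ioc 0 T, F φ t ∂μ)) := by
    rw [← tendsto_sub_nhds_zero_iff]
    have hbound : ∀ n, ‖(∫ t in Set.Ioc 0 T, F (φn n) t ∂μ) - ∫ t in Set.Ioc 0 T, F φ t ∂μ‖
        ≤ δ n * M := by
      intro n
      rw [← integral_sub (hFintn n) hFintφ]
      refine norm_integral_le_of_norm_le_const ?_
      filter_upwards [ae_restrict_mem measurableSet_Ioc] with t ht
      have ht0 : (0:ℝ) ≤ t := ht.1.le
      have hTt : (0:ℝ) ≤ T - t := by linarith [ht.2]
      haveI : IsFiniteKernel (Q (T - t)) := stmt8_finKer _ (hsub _ hTt)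
      have hψd : ∀ x, |kapply (Q (T - t)) (φn n) x - kapply (Q (T - t)) φ x| ≤ D n := by
        intro x
        rw [← stmt8_kapply_sub (Q (T - t)) (hφn n) hφ (hCn n) hC x]
        exact stmt8_kapply_bound _ (hsub _ hTt) (hD0 n) (hDle n) x
      have hψbn : ∀ x, |kapply (Q (T - t)) (φn n) x| ≤ C + D n :=
        stmt8_kapply_bound _ (hsub _ hTt) (by linarith [hD0 n]) (hCn n)
      have hψb : ∀ x, |kapply (Q (T - t)) φ x| ≤ C :=
        stmt8_kapply_bound _ (hsub _ hTt) hC0 hC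
      have hsq : ∀ x, |(kapply (Q (T - t)) (φn n) x) ^ 2 - (kapply (Q (T - t)) φ x) ^ 2|
          ≤ δ n := fun x => stmt8_sq_diff (hψd x) (hψbn x) (hψb x) (hD0 n)
      have := stmt8_gamma_diff Q η₀ (hsub t ht0)
        ((stmt8_measKapply (Q (T - t)) (hφn n)).pow measurable_const)
        ((stmt8_measKapply (Q (T - t)) hφ).pow measurable_const)
        (Cf := (C + D n) ^ 2) (Cg := C ^ 2) (by positivity) (by positivity)
        (fun x => by rw [abs_pow]; exact pow_le_pow_left₀ (abs_nonneg _) (hψbn x) 2)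
        (fun x => by rw [abs_pow]; exact pow_le_pow_left₀ (abs_nonneg _) (hψb x) 2)
        (hδ0 n) hsq
      simpa [hFdef] using this
    refine squeeze_zero_norm hbound ?_
    simpa using hδto.mul_const M
  -- rewrite σ_T² via the explicit formula
  have hform : ∀ (g : E → ℝ), Measurable g → ∀ Cg : ℝ, (∀ x, |g x| ≤ Cg) →
      Integrable (F g) (μ.restrict (Set.Ioc 0 T)) →
      sigmaSqT Q η₀ T μ g =
        pFun Q η₀ T * gammaMeas Q η₀ T (fun x => g x ^ 2) - (G g) ^ 2
        - Real.log (pFun Q η₀ T) * (G g) ^ 2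
        + 2 * ((∫ t in Set.Ioc 0 T, F g t ∂μ)
            - (G g) ^ 2 * ∫ t in Set.Ioc 0 T, (pFun Q η₀ t)⁻¹ ∂μ) := by
    intro g hg Cg hCg hFi
    exact stmt8_formula Q η₀ hsub hsemi hpT μ hg hCg hFi hpint
  have hrw : (fun n => sigmaSqT Q η₀ T μ (φn n)) =
      (fun n => pFun Q η₀ T * gammaMeas Q η₀ T (fun x => φn n x ^ 2) - (G (φn n)) ^ 2
        - Real.log (pFun Q η₀ T) * (G (φn n)) ^ 2
        + 2 * ((∫ t in Set.Ioc 0 T, F (φn n) t ∂μ)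
            - (G (φn n)) ^ 2 * ∫ t in Set.Ioc 0 T, (pFun Q η₀ t)⁻¹ ∂μ)) :=
    funext fun n => hform (φn n) (hφn n) (C + D n) (hCn n) (hFintn n)
  rw [hrw, hform φ hφ C hC hFintφ]
  have ha2 : Tendsto (fun n => (G (φn n)) ^ 2) atTop (𝓝 ((G φ) ^ 2)) := ha.pow 2
  exact (((tendsto_const_nhds.mul hb).sub ha2).sub (tendsto_const_nhds.mul ha2)).add
    (tendsto_const_nhds.mul (hz.sub (ha2.mul tendsto_const_nhds)))
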